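/- If a consistent theory T extends Robinson arithmetic Q (in particular, T satisfies: T ⊢ i̅ ≠ j̅ for i ≠ j; T ⊢ n̄ ≤ m̄ and T ⊢ ∀y(m̄ ≤ y → n̄ ≤ y) for n ≤ m; T ⊢ ∀y(y ≤ n̄ ∨ n̄ ≤ y); T ⊢ ∀y(y ≤ n̄ ↔ ⋁_{i≤n} y = i̅); if T ⊢ φ with proof coded by k then T ⊢ Proof_T(k̄, ⌜φ⌝); and if k does not code a T-proof of φ then T ⊢ ¬Proof_T(k̄, ⌜φ⌝)), then every function weakly representable in T is representable in T. Specifically, if φ weakly represents f, then ψ(x,y) := ∃z[ρ(z,⌜φ(x,y)⌝) ∧ ∀y' ≤ z (y' ≠ y → ¬ρ(z,⌜φ(x,y')⌝))], where ρ(z,x) := ∃u ≤ z Proof_T(u,x), represents f. -/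

import Mathlib

open FirstOrder Language

/-- Function symbols of our arithmetical language: `0` and successor `S`
(so that every natural number `n` has a numeral `n̄ = Sⁿ0`). -/
inductive ArFunc : ℕ → Type
  | zero : ArFunc 0
  | succ : ArFunc 1

/-- Relation symbols of our arithmetical language: `<` and `≤`. -/
inductive ArRel : ℕ → Type
  | lt : ArRel 2
  | le : ArRel 2

/-- The first-order language `⟨0, S, <, ≤⟩`. -/
def Lar : Language := ⟨ArFunc, ArRel⟩

/-- The numeral `n̄ = Sⁿ0`. -/
def num {α : Type} : ℕ → Lar.Term α
  | 0 => Term.func ArFunc.zero ![]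
  | n + 1 => Term.func ArFunc.succ ![num n]

/-- The formula `t < s`. -/
def ltF {α : Type} (t s : Lar.Term α) : Lar.Formula α :=
  Relations.formula₂ ArRel.lt t s

/-- The formula `t ≤ s`. -/
def leF {α : Type} (t s : Lar.Term α) : Lar.Formula α :=
  Relations.formula₂ ArRel.le t s

/-- Universal quantification of a formula in one variable, as a sentence `∀ y, φ(y)`. -/
noncomputable def allS (φ : Lar.Formula (Fin 1)) : Lar.Sentence :=
  Formula.iAlls (Fin 1) (φ.relabel (fun _ : Fin 1 => (Sum.inr 0 : Empty ⊕ Fin 1)))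

/-- The finite disjunction `y = 0̄ ∨ y = 1̄ ∨ ⋯ ∨ y = n̄` (in the free variable `y`). -/
def eqDisj : ℕ → Lar.Formula (Fin 1)
  | 0 => Term.equal (Term.var 0) (num 0)
  | n + 1 => eqDisj n ⊔ Term.equal (Term.var 0) (num (n + 1))

/-- `T` proves `θ(n̄, y) ∧ θ(n̄, z) → y = z` universally, i.e. the sentence
`∀ y z (θ(n̄, y) ∧ θ(n̄, z) → y = z)`. -/
noncomputable def uniqueSent (θ : Lar.Formula (Fin 2)) (n : ℕ) : Lar.Sentence :=
  Formula.iAlls (Fin 2) (Formula.relabel (fun i : Fin 2 => (Sum.inr i : Empty ⊕ Fin 2))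
    (Formula.imp ((θ.subst ![num n, Term.var 0]) ⊓ (θ.subst ![num n, Term.var 1]))
      (Term.equal (Term.var 0) (Term.var 1))))

/-- The sentence `φ(n̄, m̄)`: substitute the numerals `n̄, m̄` for the two free variables. -/
def substS (φ : Lar.Formula (Fin 2)) (n m : ℕ) : Lar.Sentence :=
  φ.subst ![num n, num m]

/-- The sentence `Pr(k̄, n̄, m̄)`. -/
def substS3 (Pr : Lar.Formula (Fin 3)) (k n m : ℕ) : Lar.Sentence :=
  Pr.subst ![num k, num n, num m]

section
variable {M : Type*} [Lar.Structure M]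

/-- value of numeral -/
def eN (M : Type*) [Lar.Structure M] (n : ℕ) : M := (num (α := Empty) n).realize (fun x => x.elim)

@[simp] lemma realize_num {α : Type} (v : α → M) (n : ℕ) :
    (num (α := α) n).realize v = eN M n := by
  induction n with
  | zero =>
      simp only [num, eN, Term.realize]
      congr 1
      funext i
      exact absurd i.2 (by simp)
  | succ n ih =>
      simp only [num, eN, Term.realize] at *
      congr 1
      funext i
      fin_cases i
      simpa using ih

lemma realize_eqDisj (v : Fin 1 → M) (n : ℕ) :
    (eqDisj n).Realize v ↔ ∃ i ≤ n, v 0 = eN M i := by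
  induction n with
  | zero =>
      simp only [eqDisj, Nat.le_zero, exists_eq_left]
      rw [Formula.realize_equal]
      simp
  | succ n ih =>
      simp only [eqDisj, Formula.realize_sup, ih]
      constructor
      · rintro (⟨i, hi, h⟩ | h)
        · exact ⟨i, by omega, h⟩
        · refine ⟨n+1, le_refl _, ?_⟩
          rw [Formula.realize_equal] at h
          simpa using h
      · rintro ⟨i, hi, h⟩
        rcases Nat.lt_or_ge i (n+1) with h' | h'
        · exact Or.inl ⟨i, by omega, h⟩
        · right
          have : i = n + 1 := by omega
          subst this
          rw [Formula.realize_equal]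
          simpa using h
end

section Psi
variable (Pr : Lar.Formula (Fin 3))

/-- `u ≤ z ∧ Pr(u,x,y)`, in context z=inr 0, u=inr 1 (k=2). -/
def AinnerF (Pr : Lar.Formula (Fin 3)) : Lar.BoundedFormula (Fin 2) 2 :=
  (Relations.boundedFormula₂ ArRel.le (Term.var (Sum.inr 1)) (Term.var (Sum.inr 0))) ⊓
    (BoundedFormula.relabel ![Sum.inr 1, Sum.inl 0, Sum.inl 1] Pr)

/-- `u ≤ z ∧ Pr(u,x,y')`, in context z=inr 0, y'=inr 1, u=inr 2 (k=3). -/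
def BinnerF (Pr : Lar.Formula (Fin 3)) : Lar.BoundedFormula (Fin 2) 3 :=
  (Relations.boundedFormula₂ ArRel.le (Term.var (Sum.inr 2)) (Term.var (Sum.inr 0))) ⊓
    (BoundedFormula.relabel ![Sum.inr 2, Sum.inl 0, Sum.inr 1] Pr)

def bodyF (Pr : Lar.Formula (Fin 3)) : Lar.BoundedFormula (Fin 2) 2 :=
  (Relations.boundedFormula₂ ArRel.le (Term.var (Sum.inr 1)) (Term.var (Sum.inr 0))).imp
    ((Term.bdEqual (Term.var (Sum.inr 1)) (Term.var (Sum.inl 1))).not.imp (BinnerF Pr).ex.not)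

def psiF (Pr : Lar.Formula (Fin 3)) : Lar.Formula (Fin 2) :=
  ((AinnerF Pr).ex ⊓ (bodyF Pr).all).ex

variable {M : Type*} [Lar.Structure M]

def leM (a b : M) : Prop := Structure.RelMap (L := Lar) ArRel.le ![a, b]

lemma realize_leBF {α : Type*} {l : ℕ} (t s : Lar.Term (α ⊕ Fin l)) (v : α → M)
    (xs : Fin l → M) :
    (Relations.boundedFormula₂ (L := Lar) ArRel.le t s).Realize v xs ↔
      leM (t.realize (Sum.elim v xs)) (s.realize (Sum.elim v xs)) :=
  BoundedFormula.realize_rel₂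

lemma realize_leF {α : Type} (t s : Lar.Term α) (v : α → M) :
    (leF t s).Realize v ↔ leM (t.realize v) (s.realize v) :=
  Formula.realize_rel₂

lemma snoc2 (d : Fin 0 → M) (z u : M) : Fin.snoc (Fin.snoc d z) u = ![z, u] := by
  funext i; fin_cases i <;> simp [Fin.snoc]

lemma snoc3 (d : Fin 0 → M) (z u w : M) :
    Fin.snoc (Fin.snoc (Fin.snoc d z) u) w = ![z, u, w] := by
  funext i; fin_cases i <;> simp [Fin.snoc]

lemma snoc3' (z u w : M) : Fin.snoc ![z, u] w = ![z, u, w] := by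
  funext i; fin_cases i <;> rfl

lemma comp_natAdd_zero {n : ℕ} (g : Fin (n + 0) → M) :
    g ∘ Fin.natAdd n = (default : Fin 0 → M) := by
  funext i; exact i.elim0

lemma comp_castAdd_zero {n : ℕ} (g : Fin (n + 0) → M) : g ∘ Fin.castAdd 0 = g := by
  funext i; rfl

lemma comp_vec3 {β γ : Type*} (g : β → γ) (c0 c1 c2 : β) :
    g ∘ ![c0, c1, c2] = ![g c0, g c1, g c2] := by
  funext i; fin_cases i <;> simp

lemma realize_psiF (a b : M) :
    (psiF Pr).Realize ![a, b] ↔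
      ∃ z : M, (∃ u : M, leM u z ∧ Pr.Realize ![u, a, b]) ∧
        ∀ y' : M, leM y' z → y' ≠ b →
          ¬ ∃ u : M, leM u z ∧ Pr.Realize ![u, a, y'] := by
  have h : ∀ xs : Fin 0 → M, (psiF Pr).Realize ![a,b] ↔ BoundedFormula.Realize (psiF Pr) ![a,b] xs := by
    intro xs
    rw [Subsingleton.elim xs default]; rfl
  rw [h default]
  simp only [psiF, AinnerF, bodyF, BinnerF, leM, Formula.Realize,
    BoundedFormula.realize_ex, BoundedFormula.realize_all, BoundedFormula.realize_inf,
    BoundedFormula.realize_imp, BoundedFormula.realize_not, realize_leBF,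
    BoundedFormula.realize_bdEqual, BoundedFormula.realize_relabel, Term.realize_var,
    snoc2, snoc3, snoc3', comp_natAdd_zero, comp_castAdd_zero, comp_vec3,
    Matrix.cons_val_zero, Matrix.cons_val_one, Matrix.head_cons, Matrix.cons_val_two,
    Matrix.tail_cons, Sum.elim_inl, Sum.elim_inr]

end Psi

section ModelFacts
variable {M : Type*} [Lar.Structure M]

lemma realize_allS' (φ : Lar.Formula (Fin 1)) :
    M ⊨ allS φ ↔ ∀ y : M, φ.Realize (fun _ => y) := by
  rw [allS, Sentence.Realize, Formula.realize_iAlls]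
  constructor
  · intro h y
    have := h (fun _ => y)
    rw [Formula.realize_relabel] at this
    convert this using 2
    rfl
  · intro h i
    have := h (i 0)
    rw [Formula.realize_relabel]
    convert this using 2
    rfl

lemma realize_neqS (i j : ℕ) :
    M ⊨ Formula.not (Term.equal (num i) (num j) : Lar.Sentence) ↔ eN M i ≠ eN M j := by
  rw [Sentence.Realize, Formula.realize_not, Formula.realize_equal]
  simp

lemma realize_leFS (n m : ℕ) :
    M ⊨ (leF (num n) (num m) : Lar.Sentence) ↔ leM (eN M n) (eN M m) := by
  rw [Sentence.Realize, realize_leF]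
  simp [leM]

lemma realize_le2S (n m : ℕ) :
    M ⊨ allS (Formula.imp (leF (num m) (Term.var 0)) (leF (num n) (Term.var 0))) ↔
      ∀ y : M, leM (eN M m) y → leM (eN M n) y := by
  rw [realize_allS']
  apply forall_congr'
  intro y
  rw [Formula.realize_imp, realize_leF, realize_leF]
  simp [leM]

lemma realize_hbS (n : ℕ) :
    M ⊨ allS ((leF (Term.var 0) (num n)) ⊔ (leF (num n) (Term.var 0))) ↔
      ∀ y : M, leM y (eN M n) ∨ leM (eN M n) y := by
  rw [realize_allS']
  apply forall_congr'
  intro y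
  rw [Formula.realize_sup, realize_leF, realize_leF]
  simp [leM]

lemma realize_hcS (n : ℕ) :
    M ⊨ allS (Formula.iff (leF (Term.var 0) (num n)) (eqDisj n)) ↔
      ∀ y : M, leM y (eN M n) ↔ ∃ i ≤ n, y = eN M i := by
  rw [realize_allS']
  apply forall_congr'
  intro y
  rw [Formula.realize_iff, realize_leF, realize_eqDisj]
  simp [leM]

lemma realize_subst2 (θ : Lar.Formula (Fin 2)) (n m : ℕ) :
    M ⊨ (θ.subst ![num n, num m] : Lar.Sentence) ↔ θ.Realize ![eN M n, eN M m] := by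
  unfold Sentence.Realize Formula.Realize
  rw [BoundedFormula.realize_subst]
  have hv : (fun a => Term.realize (default : Empty → M) (![num n, num m] a))
      = ![eN M n, eN M m] := by
    funext i; fin_cases i <;> simp
  rw [hv]

lemma realize_subst3 (θ : Lar.Formula (Fin 3)) (k n m : ℕ) :
    M ⊨ (θ.subst ![num k, num n, num m] : Lar.Sentence) ↔
      θ.Realize ![eN M k, eN M n, eN M m] := by
  unfold Sentence.Realize Formula.Realize
  rw [BoundedFormula.realize_subst]
  have hv : (fun a => Term.realize (default : Empty → M) (![num k, num n, num m] a))
      = ![eN M k, eN M n, eN M m] := by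
    funext i; fin_cases i <;> simp
  rw [hv]

end ModelFacts

/-- If a consistent theory `T` extends Robinson arithmetic `Q`, in the sense that:
(a) `T ⊢ ī ≠ j̄` for `i ≠ j`, and `T ⊢ n̄ ≤ m̄` and `T ⊢ ∀y (m̄ ≤ y → n̄ ≤ y)` for `n ≤ m`;
(b) `T ⊢ ∀y (y ≤ n̄ ∨ n̄ ≤ y)`;
(c) `T ⊢ ∀y (y ≤ n̄ ↔ ⋁_{i ≤ n} y = ī)`;
and `T` has a proof predicate `Pr(u, x, y)` (expressing `Proof_T(u, ⌜φ(x, y)⌝)` for the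
weakly representing formula `φ` below) together with a proof-coding relation `PrfCode`
("`k` codes a `T`-proof of the sentence `σ`") such that: `T ⊢ σ` iff some `k` codes a
`T`-proof of `σ`; (d) if `k` codes a `T`-proof of `φ(n̄, m̄)` then `T ⊢ Pr(k̄, n̄, m̄)`;
(e) if `k` does not code a `T`-proof of `φ(n̄, m̄)` then `T ⊢ ¬Pr(k̄, n̄, m̄)`; and the
Gödel coding is such that any code of a proof of `φ(n̄, m̄)` is at least `m`; then every
function `f` weakly representable in `T` (by `φ`) is representable in `T` (the representing
formula being `ψ(x,y) := ∃z[ρ(z,x,y) ∧ ∀y' ≤ z (y' ≠ y → ¬ρ(z,x,y'))]`, where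
`ρ(z,x,y) := ∃u ≤ z Pr(u,x,y)`). -/
theorem weakly_representable_implies_representable
    (T : Lar.Theory) (hcon : ¬ T ⊨ᵇ (⊥ : Lar.Sentence))
    (f : ℕ → ℕ) (φ : Lar.Formula (Fin 2))
    (Pr : Lar.Formula (Fin 3)) (PrfCode : ℕ → Lar.Sentence → Prop)
    (hneq : ∀ i j : ℕ, i ≠ j → T ⊨ᵇ Formula.not (Term.equal (num i) (num j) : Lar.Sentence))
    (hle1 : ∀ n m : ℕ, n ≤ m → T ⊨ᵇ (leF (num n) (num m) : Lar.Sentence))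
    (hle2 : ∀ n m : ℕ, n ≤ m →
      T ⊨ᵇ allS (Formula.imp (leF (num m) (Term.var 0)) (leF (num n) (Term.var 0))))
    (hb : ∀ n : ℕ, T ⊨ᵇ allS ((leF (Term.var 0) (num n)) ⊔ (leF (num n) (Term.var 0))))
    (hc : ∀ n : ℕ, T ⊨ᵇ allS (Formula.iff (leF (Term.var 0) (num n)) (eqDisj n)))
    (hprov : ∀ σ : Lar.Sentence, (T ⊨ᵇ σ ↔ ∃ k, PrfCode k σ))
    (hd : ∀ k n m : ℕ, PrfCode k (substS φ n m) → T ⊨ᵇ substS3 Pr k n m)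
    (he : ∀ k n m : ℕ, ¬ PrfCode k (substS φ n m) → T ⊨ᵇ Formula.not (substS3 Pr k n m))
    (hbound : ∀ k n m : ℕ, PrfCode k (substS φ n m) → m ≤ k)
    (hw1 : ∀ n m : ℕ, f n = m → T ⊨ᵇ substS φ n m)
    (hw2 : ∀ n m : ℕ, f n ≠ m → ¬ T ⊨ᵇ substS φ n m) :
    ∃ ψ : Lar.Formula (Fin 2),
      (∀ n m : ℕ, f n = m → T ⊨ᵇ substS ψ n m) ∧
      (∀ n m : ℕ, f n ≠ m → T ⊨ᵇ Formula.not (substS ψ n m)) := by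
  classical
  refine ⟨psiF Pr, ?_, ?_⟩
  · rintro n m rfl
    obtain ⟨k, hk⟩ := (hprov (substS φ n (f n))).1 (hw1 n (f n) rfl)
    intro M v xs
    rw [Subsingleton.elim v default, Subsingleton.elim xs default]
    show M ⊨ substS (psiF Pr) n (f n)
    have hhc : ∀ (K : ℕ) (y : M), leM y (eN M K) ↔ ∃ i ≤ K, y = eN M i :=
      fun K => (realize_hcS K).1 ((hc K).realize_sentence M)
    rw [show substS (psiF Pr) n (f n) = (psiF Pr).subst ![num n, num (f n)] from rfl,
      realize_subst2, realize_psiF]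
    refine ⟨eN M k, ⟨eN M k, ?_, ?_⟩, ?_⟩
    · exact (realize_leFS k k).1 ((hle1 k k le_rfl).realize_sentence M)
    · exact (realize_subst3 Pr k n (f n)).1 ((hd k n (f n) hk).realize_sentence M)
    · rintro y' hle hne ⟨u, hu, hPru⟩
      obtain ⟨i, hik, rfl⟩ := (hhc k y').1 hle
      have hifn : f n ≠ i := fun h => hne (by rw [h])
      obtain ⟨j, hjk, rfl⟩ := (hhc k u).1 hu
      by_cases hPC : PrfCode j (substS φ n i)
      · exact hw2 n i hifn ((hprov _).2 ⟨j, hPC⟩)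
      · have hnot := (Sentence.realize_not _).1 ((he j n i hPC).realize_sentence M)
        exact hnot ((realize_subst3 Pr j n i).2 hPru)
  · intro n m hm
    intro M v xs
    rw [Subsingleton.elim v default, Subsingleton.elim xs default]
    have hhc : ∀ (K : ℕ) (y : M), leM y (eN M K) ↔ ∃ i ≤ K, y = eN M i :=
      fun K => (realize_hcS K).1 ((hc K).realize_sentence M)
    have key : ¬ M ⊨ substS (psiF Pr) n m := by
      intro hψ
      have hr := (realize_subst2 (psiF Pr) n m).1 hψ
      rw [realize_psiF] at hr
      obtain ⟨z, ⟨u0, hu0z, hPr0⟩, hB⟩ := hr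
      obtain ⟨k, hk⟩ := (hprov (substS φ n (f n))).1 (hw1 n (f n) rfl)
      have hmk : f n ≤ k := hbound k n (f n) hk
      rcases (realize_hbS k).1 ((hb k).realize_sentence M) z with hzk | hkz
      · obtain ⟨j, hjk, rfl⟩ := (hhc k z).1 hzk
        obtain ⟨i, hij, rfl⟩ := (hhc j u0).1 hu0z
        have hPC : ¬ PrfCode i (substS φ n m) := fun h => hw2 n m hm ((hprov _).2 ⟨i, h⟩)
        have hnot := (Sentence.realize_not _).1 ((he i n m hPC).realize_sentence M)
        exact hnot ((realize_subst3 Pr i n m).2 hPr0)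
      · apply hB (eN M (f n))
        · exact (realize_le2S (f n) k).1 ((hle2 (f n) k hmk).realize_sentence M) z hkz
        · exact (realize_neqS (f n) m).1 ((hneq (f n) m hm).realize_sentence M)
        · exact ⟨eN M k, hkz, (realize_subst3 Pr k n (f n)).1 ((hd k n (f n) hk).realize_sentence M)⟩
    exact (Sentence.realize_not _).2 key
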